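/- In a k-linear abelian rigid symmetric monoidal category with End(1) = k, splitting of a short exact sequence 0 → M → N → P → 0 with P dualizable is equivalent to splitting of the associated short exact sequence 0 → M ⊗ P^∨ → E → 1 → 0, where E is the preimage of the coevaluation image of 1 in P ⊗ P^∨ under the map N ⊗ P^∨ → P ⊗ P^∨. -/

import Mathlib

open CategoryTheory CategoryTheory.Limits CategoryTheory.MonoidalCategory

namespace Deligne

variable {C : Type*} [Category C] [Abelian C] [MonoidalCategory C] [SymmetricCategory C]

/-- Given a short exact sequence `0 → M → N → P → 0` (a short complex `S` with
`S.X₃ = P` rigid), the object `E`: the pullback of the coevaluation `1 → P ⊗ P^∨` along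
`N ⊗ P^∨ → P ⊗ P^∨`, i.e. the preimage of the coevaluation image of `1` in `P ⊗ P^∨`. -/
noncomputable def Eobj (S : ShortComplex C) [HasRightDual S.X₃] : C :=
  pullback (S.g ▷ (S.X₃)ᘁ) (η_ S.X₃ (S.X₃)ᘁ)

/-- The associated short complex `0 → M ⊗ P^∨ → E → 1 → 0` of the short exact sequence
`0 → M → N → P → 0`. -/
noncomputable def assocComplex [MonoidalPreadditive C]
    (S : ShortComplex C) [HasRightDual S.X₃] : ShortComplex C :=
  ShortComplex.mk
    (pullback.lift (S.f ▷ (S.X₃)ᘁ) 0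
      (by rw [← comp_whiskerRight, S.zero, MonoidalPreadditive.zero_whiskerRight, zero_comp]) :
        S.X₁ ⊗ (S.X₃)ᘁ ⟶ Eobj S)
    (pullback.snd (S.g ▷ (S.X₃)ᘁ) (η_ S.X₃ (S.X₃)ᘁ) : Eobj S ⟶ 𝟙_ C)
    (by simp [pullback.lift_snd])

set_option linter.unusedSectionVars false

/-- The mate `P ⟶ X` of a morphism `1 ⟶ X ⊗ Pᘁ`. -/
noncomputable def mate {P : C} [HasRightDual P] {X : C} (h : 𝟙_ C ⟶ X ⊗ Pᘁ) : P ⟶ X :=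
  (λ_ P).inv ≫ h ▷ P ≫ (α_ X Pᘁ P).hom ≫ X ◁ ε_ P Pᘁ ≫ (ρ_ X).hom

lemma mate_natural {P : C} [HasRightDual P] {X Y : C} (h : 𝟙_ C ⟶ X ⊗ Pᘁ) (u : X ⟶ Y) :
    mate h ≫ u = mate (h ≫ u ▷ Pᘁ) := by
  simp only [mate, Category.assoc, comp_whiskerRight]
  rw [← rightUnitor_naturality, whisker_exchange_assoc]
  simp [← associator_naturality_right, ← associator_naturality_left]

lemma mate_coev {P : C} [HasRightDual P] : mate (η_ P Pᘁ) = 𝟙 P := by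
  simp [mate, ExactPairing.evaluation_coevaluation_assoc]

/-- In a tensor category in Deligne's sense — a `k`-linear abelian rigid
symmetric monoidal category with `End(1) = k`, over a field `k` of characteristic zero —
a short exact sequence `0 → M → N → P → 0` (with `P` dualizable) splits if and only if the
associated short exact sequence `0 → M ⊗ P^∨ → E → 1 → 0` splits, where `E` is the
preimage in `N ⊗ P^∨` of the coevaluation image of `1` in `P ⊗ P^∨`. -/
theorem statement19 {k : Type*} [Field k] [CharZero k]
    [Linear k C] [MonoidalPreadditive C] [MonoidalLinear k C]
    (hEnd : ∀ f : End (𝟙_ C), ∃! c : k, f = c • 𝟙 (𝟙_ C))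
    (S : ShortComplex C) [HasRightDual S.X₃] (hS : S.ShortExact) :
    Nonempty S.Splitting ↔ Nonempty (assocComplex S).Splitting := by
  constructor
  · rintro ⟨sp⟩
    refine ⟨{ r := pullback.fst _ _ ≫ sp.r ▷ (S.X₃)ᘁ,
              s := (pullback.lift (η_ S.X₃ (S.X₃)ᘁ ≫ sp.s ▷ (S.X₃)ᘁ) (𝟙 (𝟙_ C))
                (by simp [← comp_whiskerRight, sp.s_g]) : 𝟙_ C ⟶ pullback (S.g ▷ (S.X₃)ᘁ) (η_ S.X₃ (S.X₃)ᘁ)),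
              f_r := ?_, s_g := ?_, id := ?_ }⟩
    · dsimp only [assocComplex, ShortComplex.mk, Eobj]
      simp only [pullback.lift_fst_assoc]
      simp [← comp_whiskerRight, sp.f_r]
    · dsimp only [assocComplex, ShortComplex.mk, Eobj]
      simp only [pullback.lift_snd]
    · unfold assocComplex
      dsimp only [Eobj]
      apply pullback.hom_ext
      · simp only [Preadditive.add_comp, Category.assoc, pullback.lift_fst, Category.id_comp,
          ← pullback.condition_assoc, ← comp_whiskerRight, ← Preadditive.comp_add,
          ← MonoidalPreadditive.add_whiskerRight, sp.id, MonoidalCategory.id_whiskerRight,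
          Category.comp_id]
      · simp [pullback.lift_snd]
  · rintro ⟨sp⟩
    let s : 𝟙_ C ⟶ pullback (S.g ▷ (S.X₃)ᘁ) (η_ S.X₃ (S.X₃)ᘁ) := sp.s
    have hsnd : s ≫ pullback.snd (S.g ▷ (S.X₃)ᘁ) (η_ S.X₃ (S.X₃)ᘁ) = 𝟙 (𝟙_ C) := sp.s_g
    have hh : (s ≫ pullback.fst _ _) ≫ S.g ▷ (S.X₃)ᘁ = η_ S.X₃ (S.X₃)ᘁ := by
      rw [Category.assoc, pullback.condition, reassoc_of% hsnd]
    have hsg : mate (s ≫ pullback.fst _ _) ≫ S.g = 𝟙 S.X₃ := by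
      rw [mate_natural, hh, mate_coev]
    exact ⟨ShortComplex.Splitting.ofExactOfSection S hS.exact _ hsg hS.mono_f⟩

end Deligne
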